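/- Let A : ℕ × ℕ → Z_2 be a symmetric row-finite matrix and suppose every finite 'truncated' system sum_{j ≤ M} a_{ij} x_j = a_{ii} (i ≤ n, for appropriate M depending on n) has a solution. Then the full infinite system Ax = d has a solution x : ℕ → Z_2, where d is the diagonal vector. -/

import Mathlib

theorem infinite_solution_of_truncated_solutions (A : ℕ → ℕ → ZMod 2)
    (hsymm : ∀ i j, A i j = A j i)
    (hrow : ∀ i, (Function.support (A i)).Finite)
    (htrunc : ∀ n : ℕ, ∃ M : ℕ, n ≤ M ∧ (∀ i ≤ n, ∀ j, M < j → A i j = 0) ∧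
      ∃ x : ℕ → ZMod 2, ∀ i ≤ n, ∑ j ∈ Finset.range (M + 1), A i j * x j = A i i) :
    ∃ x : ℕ → ZMod 2, ∀ i, ∑ᶠ j, A i j * x j = A i i := by
  letI : TopologicalSpace (ZMod 2) := ⊥
  haveI : DiscreteTopology (ZMod 2) := ⟨rfl⟩
  have key : ∀ i (x : ℕ → ZMod 2),
      ∑ᶠ j, A i j * x j = ∑ j ∈ (hrow i).toFinset, A i j * x j := by
    intro i x
    apply finsum_eq_finset_sum_of_support_subset
    intro j hj
    simp only [Function.mem_support] at hj
    simp only [Set.Finite.coe_toFinset, Function.mem_support]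
    intro h; apply hj; rw [h, zero_mul]
  set C : ℕ → Set (ℕ → ZMod 2) := fun i => {x | ∑ᶠ j, A i j * x j = A i i} with hC
  have hclosed : ∀ i, IsClosed (C i) := by
    intro i
    have hCi : C i = (fun x : ℕ → ZMod 2 =>
        ∑ j ∈ (hrow i).toFinset, A i j * x j) ⁻¹' {A i i} := by
      ext x; simp [hC, key]
    rw [hCi]
    exact IsClosed.preimage
      (continuous_finset_sum _ (fun j _ =>
        (continuous_of_discreteTopology (f := fun c : ZMod 2 => A i j * c)).comp
          (continuous_apply j))) (isClosed_discrete _)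
  set D : ℕ → Set (ℕ → ZMod 2) := fun n => ⋂ i ∈ Finset.range (n + 1), C i with hD
  have hDclosed : ∀ n, IsClosed (D n) := fun n =>
    isClosed_biInter fun i _ => hclosed i
  have hDne : ∀ n, (D n).Nonempty := by
    intro n
    obtain ⟨M, hM, hzero, x, hx⟩ := htrunc n
    refine ⟨x, ?_⟩
    simp only [hD, Set.mem_iInter, Finset.mem_range, Nat.lt_succ_iff]
    intro i hi
    have : ∑ᶠ j, A i j * x j = ∑ j ∈ Finset.range (M + 1), A i j * x j := by
      apply finsum_eq_finset_sum_of_support_subset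
      intro j hj
      simp only [Function.mem_support] at hj
      simp only [Finset.coe_range, Set.mem_Iio, Nat.lt_succ_iff]
      by_contra h
      push_neg at h
      exact hj (by rw [hzero i hi j h, zero_mul])
    simpa [hC, this] using hx i hi
  have hDdir : Directed (· ⊇ ·) D := by
    intro m n
    refine ⟨max m n, ?_, ?_⟩ <;>
    · intro x hx
      simp only [hD, Set.mem_iInter, Finset.mem_range, Nat.lt_succ_iff] at hx ⊢
      intro i hi
      exact hx i (le_trans hi (by simp))
  have hcompact : ∀ n, IsCompact (D n) := fun n => (hDclosed n).isCompact
  obtain ⟨x, hxmem⟩ :=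
    IsCompact.nonempty_iInter_of_directed_nonempty_isCompact_isClosed D hDdir hDne
      hcompact hDclosed
  refine ⟨x, fun i => ?_⟩
  have hxi : x ∈ D i := Set.mem_iInter.mp hxmem i
  simp only [hD, Set.mem_iInter, Finset.mem_range, Nat.lt_succ_iff] at hxi
  exact hxi i le_rfl
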